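/- If q_i and q_j are linked quartet trees distinguishing adjacent interior edges of a binary tree T, and x is a leaf outside supp(q_i) ∪ supp(q_j), then x cannot replace two different taxa of supp(q_i) ∩ supp(q_j) in forming q_i(x) and q_j(x); equivalently, |supp(q_i(x)) ∪ supp(q_j(x))| ≠ 6. -/

import Mathlib

open SimpleGraph Finset

/-- An unrooted binary tree: a tree in which every vertex has degree 1 or 3. -/
def IsBinaryTree {V : Type} [Fintype V] [DecidableEq V]
    (G : SimpleGraph V) [DecidableRel G.Adj] : Prop :=
  G.IsTree ∧ ∀ v, G.degree v = 1 ∨ G.degree v = 3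

/-- A leaf is a vertex of degree one. -/
def IsLeaf {V : Type} [Fintype V] [DecidableEq V]
    (G : SimpleGraph V) [DecidableRel G.Adj] (v : V) : Prop := G.degree v = 1

/-- An interior edge is an edge both of whose endpoints have degree 3. -/
def InteriorEdge {V : Type} [Fintype V] [DecidableEq V]
    (G : SimpleGraph V) [DecidableRel G.Adj] (e : Sym2 V) : Prop :=
  e ∈ G.edgeSet ∧ ∀ v ∈ e, G.degree v = 3

/-- The edge `e` separates `a,b` from `c,d`: after deleting `e`, `a` and `b` lie in one
connected component and `c` and `d` lie in the other. -/
def Separates {V : Type} (G : SimpleGraph V) (e : Sym2 V) (a b c d : V) : Prop :=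
  e ∈ G.edgeSet ∧ (G.deleteEdges {e}).Reachable a b ∧
    (G.deleteEdges {e}).Reachable c d ∧ ¬ (G.deleteEdges {e}).Reachable a c

/-- The quartet tree `ab|cd` distinguishes `e` if `e` is the unique edge separating
`{a,b}` from `{c,d}`. -/
def Distinguishes {V : Type} (G : SimpleGraph V) (e : Sym2 V) (a b c d : V) : Prop :=
  Separates G e a b c d ∧ ∀ e', Separates G e' a b c d → e' = e

/-- `x` and `y` lie in the same class of the four-way partition induced by the interior
edge with endpoints `u`, `v`: they are connected after removing all edges incident
to `u` or `v`. -/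
def SameClass {V : Type} (G : SimpleGraph V) (u v x y : V) : Prop :=
  (G.deleteEdges (G.incidenceSet u ∪ G.incidenceSet v)).Reachable x y

/-- A quartet tree `ab|cd`, recorded as the ordered data of its two pairs `{a,b}`, `{c,d}`. -/
structure Q4 (V : Type) where
  a : V
  b : V
  c : V
  d : V

/-- The support of a quartet tree. -/
def Q4.supp {V : Type} [DecidableEq V] (q : Q4 V) : Finset V := {q.a, q.b, q.c, q.d}

/-- The quartet tree as an unordered pair of unordered pairs (its topology `ab|cd`). -/
def Q4.toSym {V : Type} (q : Q4 V) : Sym2 (Sym2 V) := s(s(q.a, q.b), s(q.c, q.d))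

open Classical in
/-- Quartet tree substitution: replace by `x` the element of the support of `q`
lying in the same class as `x` of the four-way partition induced by the edge `s(u,v)`. -/
noncomputable def subst {V : Type} (G : SimpleGraph V) (u v : V) (q : Q4 V) (x : V) : Q4 V :=
  if SameClass G u v x q.a then ⟨x, q.b, q.c, q.d⟩
  else if SameClass G u v x q.b then ⟨q.a, x, q.c, q.d⟩
  else if SameClass G u v x q.c then ⟨q.a, q.b, x, q.d⟩
  else ⟨q.a, q.b, q.c, x⟩

/-! ### Auxiliary lemmas -/

set_option linter.unusedSectionVars false

section Perm
variable {V : Type} {G : SimpleGraph V} {e : Sym2 V} {a b c d : V}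

lemma Separates.swap1 (h : Separates G e a b c d) : Separates G e b a c d :=
  ⟨h.1, h.2.1.symm, h.2.2.1, fun hr => h.2.2.2 (h.2.1.trans hr)⟩

lemma Separates.swap2 (h : Separates G e a b c d) : Separates G e a b d c :=
  ⟨h.1, h.2.1, h.2.2.1.symm, fun hr => h.2.2.2 (hr.trans h.2.2.1.symm)⟩

lemma Separates.pairSwap (h : Separates G e a b c d) : Separates G e c d a b :=
  ⟨h.1, h.2.2.1, h.2.1, fun hr => h.2.2.2 hr.symm⟩

lemma Separates.nac (h : Separates G e a b c d) : ¬ (G.deleteEdges {e}).Reachable a c := h.2.2.2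

lemma Separates.nad (h : Separates G e a b c d) : ¬ (G.deleteEdges {e}).Reachable a d :=
  h.swap2.nac

lemma Separates.nbc (h : Separates G e a b c d) : ¬ (G.deleteEdges {e}).Reachable b c :=
  h.swap1.nac

lemma Separates.nbd (h : Separates G e a b c d) : ¬ (G.deleteEdges {e}).Reachable b d :=
  h.swap1.swap2.nac

lemma Distinguishes.swap1 (h : Distinguishes G e a b c d) : Distinguishes G e b a c d :=
  ⟨h.1.swap1, fun e' hs => h.2 e' hs.swap1⟩

lemma Distinguishes.swap2 (h : Distinguishes G e a b c d) : Distinguishes G e a b d c :=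
  ⟨h.1.swap2, fun e' hs => h.2 e' hs.swap2⟩

lemma Distinguishes.pairSwap (h : Distinguishes G e a b c d) : Distinguishes G e c d a b :=
  ⟨h.1.pairSwap, fun e' hs => h.2 e' hs.pairSwap⟩

end Perm

section Aux
variable {V : Type} [DecidableEq V]

lemma del_mono (G : SimpleGraph V) {s t : Set (Sym2 V)} (h : s ⊆ t) :
    G.deleteEdges t ≤ G.deleteEdges s := by
  intro a b hab
  rw [deleteEdges_adj] at hab ⊢
  exact ⟨hab.1, fun hm => hab.2 (h hm)⟩

lemma tree_bridge (G : SimpleGraph V) (hG : G.IsTree) {p q : V} (he : G.Adj p q) :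
    ¬ (G.deleteEdges {s(p,q)}).Reachable p q := by
  have := (isAcyclic_iff_forall_edge_isBridge.mp hG.IsAcyclic) (G.mem_edgeSet.mpr he)
  rw [isBridge_iff] at this
  exact this

lemma mem_support_of_edge {u v w : V} {H : SimpleGraph V} (W : H.Walk u v) {e : Sym2 V}
    (he : e ∈ W.edges) (hw : w ∈ e) : w ∈ W.support := by
  induction e with
  | _ a b =>
    rcases Sym2.mem_iff.mp hw with rfl | rfl
    · exact W.fst_mem_support_of_mem_edges he
    · exact W.snd_mem_support_of_mem_edges he

lemma walk_reach_endpoint (G : SimpleGraph V) (q : V) : ∀ {x p : V} (_ : G.Walk x p),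
    (G.deleteEdges {s(p,q)}).Reachable x p ∨ (G.deleteEdges {s(p,q)}).Reachable x q := by
  intro x p W
  induction W with
  | nil => exact Or.inl (Reachable.refl _)
  | @cons x y p h _ ih =>
    by_cases he : s(x, y) = s(p, q)
    · rcases Sym2.eq_iff.mp he with ⟨rfl, rfl⟩ | ⟨rfl, rfl⟩
      · exact Or.inl (Reachable.refl _)
      · exact Or.inr (Reachable.refl _)
    · have hadj : (G.deleteEdges {s(p,q)}).Adj x y := by
        rw [deleteEdges_adj]; exact ⟨h, by simp [he]⟩
      rcases ih with h' | h'
      · exact Or.inl (hadj.reachable.trans h')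
      · exact Or.inr (hadj.reachable.trans h')

lemma walk_attach1 (G : SimpleGraph V) : ∀ {x w : V} (_ : G.Walk x w), x ≠ w →
    ∃ c, G.Adj w c ∧ (G.deleteEdges (G.incidenceSet w)).Reachable x c := by
  intro x w W
  induction W with
  | nil => intro h; exact absurd rfl h
  | @cons x y w h _ ih =>
    intro hxw
    by_cases hy : y = w
    · subst hy; exact ⟨x, h.symm, Reachable.refl _⟩
    · obtain ⟨c, hc, hr⟩ := ih hy
      refine ⟨c, hc, (Adj.reachable ?_).trans hr⟩
      rw [deleteEdges_adj]
      refine ⟨h, fun hmem => ?_⟩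
      rcases ((G.mk'_mem_incidenceSet_iff).mp hmem).2 with rfl | rfl
      · exact hxw rfl
      · exact hy rfl

lemma walk_attach (G : SimpleGraph V) (w : V) : ∀ {x u : V} (_ : G.Walk x u), x ≠ u → x ≠ w →
    ∃ c d, G.Adj c d ∧ (d = u ∨ d = w) ∧ c ≠ u ∧ c ≠ w ∧
      (G.deleteEdges (G.incidenceSet u ∪ G.incidenceSet w)).Reachable x c := by
  intro x u W
  induction W with
  | nil => intro h _; exact absurd rfl h
  | @cons x y u h _ ih =>
    intro hxu hxw
    by_cases hy : y = u ∨ y = w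
    · exact ⟨x, y, h, hy, hxu, hxw, Reachable.refl _⟩
    · push_neg at hy
      obtain ⟨c, d, hcd, hd, hcu, hcw, hr⟩ := ih hy.1 hy.2
      refine ⟨c, d, hcd, hd, hcu, hcw, (Adj.reachable ?_).trans hr⟩
      rw [deleteEdges_adj]
      refine ⟨h, fun hmem => ?_⟩
      rcases hmem with hmem | hmem
      · rcases ((G.mk'_mem_incidenceSet_iff).mp hmem).2 with rfl | rfl
        · exact hxu rfl
        · exact hy.1 rfl
      · rcases ((G.mk'_mem_incidenceSet_iff).mp hmem).2 with rfl | rfl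
        · exact hxw rfl
        · exact hy.2 rfl

lemma avoid_vertex (G : SimpleGraph V) {D : Set (Sym2 V)} {p q w : V}
    (hpw : ¬ (G.deleteEdges D).Reachable p w) (hpq : (G.deleteEdges D).Reachable p q) :
    (G.deleteEdges (D ∪ G.incidenceSet w)).Reachable p q := by
  obtain ⟨W⟩ := hpq
  have hw : w ∉ W.support := fun h => hpw ⟨W.takeUntil w h⟩
  refine ⟨W.transfer _ (fun e he => ?_)⟩
  have h1 : e ∈ (G.deleteEdges D).edgeSet := W.edges_subset_edgeSet he
  rw [edgeSet_deleteEdges] at h1 ⊢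
  refine ⟨h1.1, ?_⟩
  rintro (hD | hI)
  · exact h1.2 hD
  · exact hw (mem_support_of_edge W he hI.2)

lemma four_distinct {a b c d : V} (h : ({a,b,c,d} : Finset V).card = 4) :
    a≠b ∧ a≠c ∧ a≠d ∧ b≠c ∧ b≠d ∧ c≠d := by
  have h3 : ∀ x y z : V, ({x,y,z} : Finset V).card ≤ 3 := by
    intro x y z
    calc ({x,y,z} : Finset V).card ≤ ({y,z} : Finset V).card + 1 := Finset.card_insert_le _ _
    _ ≤ (({z} : Finset V).card + 1) + 1 := Nat.add_le_add_right (Finset.card_insert_le _ _) 1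
    _ = 3 := by rw [Finset.card_singleton]
  refine ⟨?_,?_,?_,?_,?_,?_⟩ <;> rintro rfl <;> apply absurd h <;> intro h
  · have : ({a,a,c,d} : Finset V) ⊆ {a,c,d} := by intro v hv; simp at hv ⊢; tauto
    have := (Finset.card_le_card this).trans (h3 a c d); omega
  · have : ({a,b,a,d} : Finset V) ⊆ {b,a,d} := by intro v hv; simp at hv ⊢; tauto
    have := (Finset.card_le_card this).trans (h3 b a d); omega
  · have : ({a,b,c,a} : Finset V) ⊆ {b,c,a} := by intro v hv; simp at hv ⊢; tauto
    have := (Finset.card_le_card this).trans (h3 b c a); omega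
  · have : ({a,b,b,d} : Finset V) ⊆ {a,b,d} := by intro v hv; simp at hv ⊢; tauto
    have := (Finset.card_le_card this).trans (h3 a b d); omega
  · have : ({a,b,c,b} : Finset V) ⊆ {a,c,b} := by intro v hv; simp at hv ⊢; tauto
    have := (Finset.card_le_card this).trans (h3 a c b); omega
  · have : ({a,b,c,c} : Finset V) ⊆ {a,b,c} := by intro v hv; simp at hv ⊢; tauto
    have := (Finset.card_le_card this).trans (h3 a b c); omega

lemma normalizeQ {G : SimpleGraph V} {e : Sym2 V} {a b c d y y' : V}
    (hd : Distinguishes G e a b c d)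
    (hy : y = a ∨ y = b ∨ y = c ∨ y = d) (hy' : y' = a ∨ y' = b ∨ y' = c ∨ y' = d)
    (hne : y ≠ y') (hr : (G.deleteEdges {e}).Reachable y y') :
    ∃ z t, Distinguishes G e y y' z t ∧
      (∀ v, (v = a ∨ v = b ∨ v = c ∨ v = d) → (v = y ∨ v = y' ∨ v = z ∨ v = t)) := by
  rcases hy with rfl | rfl | rfl | rfl <;> rcases hy' with rfl | rfl | rfl | rfl
  · exact absurd rfl hne
  · exact ⟨c, d, hd, by tauto⟩
  · exact absurd hr hd.1.nac
  · exact absurd hr hd.1.nad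
  · exact ⟨c, d, hd.swap1, by tauto⟩
  · exact absurd rfl hne
  · exact absurd hr hd.1.nbc
  · exact absurd hr hd.1.nbd
  · exact absurd hr.symm hd.1.nac
  · exact absurd hr.symm hd.1.nbc
  · exact absurd rfl hne
  · exact ⟨a, b, hd.pairSwap, by tauto⟩
  · exact absurd hr.symm hd.1.nad
  · exact absurd hr.symm hd.1.nbd
  · exact ⟨a, b, hd.pairSwap.swap1, by tauto⟩
  · exact absurd rfl hne

lemma same_pair_not_reach {G : SimpleGraph V} (hG : G.IsTree) {u w : V} (huw : G.Adj u w)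
    {a b c d : V} (hd : Distinguishes G s(u,w) a b c d)
    (hau : a ≠ u) (haw : a ≠ w)
    (h4 : (G.deleteEdges (G.incidenceSet u ∪ G.incidenceSet w)).Reachable a b) : False := by
  obtain ⟨W⟩ := hG.isConnected a u
  obtain ⟨c0, d0, hc0d0, hd0, hc0u, hc0w, hr4⟩ := walk_attach G w W hau haw
  have hsub1 : ({s(u,w)} : Set (Sym2 V)) ⊆ G.incidenceSet u ∪ G.incidenceSet w := by
    intro e he; rw [Set.mem_singleton_iff] at he; subst he
    exact Or.inl ((G.mk'_mem_incidenceSet_left_iff).mpr huw)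
  have hsube' : ({s(c0,d0)} : Set (Sym2 V)) ⊆ G.incidenceSet u ∪ G.incidenceSet w := by
    intro e he; rw [Set.mem_singleton_iff] at he; subst he
    rcases hd0 with rfl | rfl
    · exact Or.inl ((G.mk'_mem_incidenceSet_right_iff).mpr hc0d0)
    · exact Or.inr ((G.mk'_mem_incidenceSet_right_iff).mpr hc0d0)
  have hee' : s(c0, d0) ≠ s(u, w) := by
    intro h; rcases Sym2.eq_iff.mp h with ⟨rfl, _⟩ | ⟨rfl, _⟩
    exacts [hc0u rfl, hc0w rfl]
  have R1ac0 : (G.deleteEdges {s(u,w)}).Reachable a c0 := hr4.mono (del_mono G hsub1)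
  have R1ad0 : (G.deleteEdges {s(u,w)}).Reachable a d0 := by
    refine R1ac0.trans (Adj.reachable ?_)
    rw [deleteEdges_adj]; exact ⟨hc0d0, by simp [hee']⟩
  have nR1cd0 : ¬ (G.deleteEdges {s(u,w)}).Reachable c d0 :=
    fun h => hd.1.nac (R1ad0.trans h.symm)
  have nR1cc0 : ¬ (G.deleteEdges {s(u,w)}).Reachable c c0 := by
    intro h; apply nR1cd0
    refine h.trans (Adj.reachable ?_)
    rw [deleteEdges_adj]; exact ⟨hc0d0, by simp [hee']⟩
  obtain ⟨Wcd⟩ := hd.1.2.2.1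
  have hc0sup : c0 ∉ Wcd.support := fun h => nR1cc0 ⟨Wcd.takeUntil c0 h⟩
  have Rcd' : (G.deleteEdges {s(c0,d0)}).Reachable c d := by
    refine ⟨Wcd.transfer _ (fun e he => ?_)⟩
    have h1 := Wcd.edges_subset_edgeSet he
    rw [edgeSet_deleteEdges] at h1 ⊢
    refine ⟨h1.1, ?_⟩
    rw [Set.mem_singleton_iff]; rintro rfl
    exact hc0sup (mem_support_of_edge Wcd he (Sym2.mem_mk_left _ _))
  have Rab' : (G.deleteEdges {s(c0,d0)}).Reachable a b := h4.mono (del_mono G hsube')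
  have nRac' : ¬ (G.deleteEdges {s(c0,d0)}).Reachable a c := by
    rintro ⟨W2⟩
    by_cases hd0s : d0 ∈ W2.support
    · have Rad0' : (G.deleteEdges {s(c0,d0)}).Reachable a d0 := ⟨W2.takeUntil d0 hd0s⟩
      have Rac0' : (G.deleteEdges {s(c0,d0)}).Reachable a c0 := hr4.mono (del_mono G hsube')
      exact tree_bridge G hG hc0d0 (Rac0'.symm.trans Rad0')
    · apply hd.1.nac
      refine ⟨W2.transfer _ (fun e he => ?_)⟩
      have h1 := W2.edges_subset_edgeSet he
      rw [edgeSet_deleteEdges] at h1 ⊢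
      refine ⟨h1.1, ?_⟩
      rw [Set.mem_singleton_iff]; rintro rfl
      apply hd0s
      refine mem_support_of_edge W2 he ?_
      rcases hd0 with rfl | rfl
      exacts [Sym2.mem_mk_left _ _, Sym2.mem_mk_right _ _]
  exact hee' (hd.2 _ ⟨G.mem_edgeSet.mpr hc0d0, Rab', Rcd', nRac'⟩)

lemma core {G : SimpleGraph V} (hG : G.IsTree) {u₁ w v₂ : V}
    (h1 : G.Adj u₁ w) (h2 : G.Adj w v₂) (hne : u₁ ≠ v₂)
    {y y' z t z' : V} (hyw : y ≠ w)
    (hdi : Distinguishes G s(u₁,w) y y' z t) (hdj : Distinguishes G s(w,v₂) y y' z z')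
    (Hw : (G.deleteEdges (G.incidenceSet w)).Reachable y y') : False := by
  have hE1w : ({s(u₁,w)} : Set (Sym2 V)) ⊆ G.incidenceSet w := by
    intro e he; rw [Set.mem_singleton_iff] at he; subst he
    exact (G.mk'_mem_incidenceSet_right_iff).mpr h1
  have hE2w : ({s(w,v₂)} : Set (Sym2 V)) ⊆ G.incidenceSet w := by
    intro e he; rw [Set.mem_singleton_iff] at he; subst he
    exact (G.mk'_mem_incidenceSet_left_iff).mpr h2
  have hE12 : s(u₁,w) ≠ s(w,v₂) := by
    intro h; rcases Sym2.eq_iff.mp h with ⟨rfl, rfl⟩ | ⟨rfl, _⟩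
    exacts [hne rfl, hne rfl]
  have R1yy' : (G.deleteEdges {s(u₁,w)}).Reachable y y' := Hw.mono (del_mono G hE1w)
  have R2yy' : (G.deleteEdges {s(w,v₂)}).Reachable y y' := Hw.mono (del_mono G hE2w)
  obtain ⟨W⟩ := hG.isConnected y w
  obtain ⟨c, hcadj, hrc⟩ := walk_attach1 G W hyw
  by_cases hcu : c = u₁
  · rw [hcu] at hrc
    have R2yw : (G.deleteEdges {s(w,v₂)}).Reachable y w := by
      refine (hrc.mono (del_mono G hE2w)).trans (Adj.reachable ?_)
      rw [deleteEdges_adj]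
      exact ⟨h1, by simp [hE12]⟩
    have nR2zw : ¬ (G.deleteEdges {s(w,v₂)}).Reachable z w :=
      fun h => hdj.1.nac (R2yw.trans h.symm)
    have Rzz' := avoid_vertex G nR2zw hdj.1.2.2.1
    have R1zz' : (G.deleteEdges {s(u₁,w)}).Reachable z z' :=
      Rzz'.mono (del_mono G (fun e he => Or.inr (hE1w he)))
    exact hE12 (hdj.2 _ ⟨G.mem_edgeSet.mpr h1, R1yy', R1zz', hdi.1.nac⟩)
  · by_cases hcv : c = v₂
    · rw [hcv] at hrc
      have R1yw : (G.deleteEdges {s(u₁,w)}).Reachable y w := by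
        refine (hrc.mono (del_mono G hE1w)).trans (Adj.reachable ?_)
        rw [deleteEdges_adj]
        refine ⟨h2.symm, ?_⟩
        simp only [Set.mem_singleton_iff]
        intro h; rcases Sym2.eq_iff.mp h with ⟨rfl, _⟩ | ⟨rfl, rfl⟩
        exacts [hne rfl, hne rfl]
      have nR1zw : ¬ (G.deleteEdges {s(u₁,w)}).Reachable z w :=
        fun h => hdi.1.nac (R1yw.trans h.symm)
      have Rzt := avoid_vertex G nR1zw hdi.1.2.2.1
      have R2zt : (G.deleteEdges {s(w,v₂)}).Reachable z t :=
        Rzt.mono (del_mono G (fun e he => Or.inr (hE2w he)))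
      exact hE12 (hdi.2 _ ⟨G.mem_edgeSet.mpr h2, R2yy', R2zt, hdj.1.nac⟩).symm
    · have hcw : c ≠ w := hcadj.ne'
      have adjc1 : (G.deleteEdges {s(u₁,w)}).Adj c w := by
        rw [deleteEdges_adj]
        refine ⟨hcadj.symm, ?_⟩
        simp only [Set.mem_singleton_iff]
        intro h; rcases Sym2.eq_iff.mp h with ⟨rfl, _⟩ | ⟨rfl, _⟩
        exacts [hcu rfl, hcw rfl]
      have adjc2 : (G.deleteEdges {s(w,v₂)}).Adj c w := by
        rw [deleteEdges_adj]
        refine ⟨hcadj.symm, ?_⟩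
        simp only [Set.mem_singleton_iff]
        intro h; rcases Sym2.eq_iff.mp h with ⟨rfl, _⟩ | ⟨rfl, _⟩
        exacts [hcw rfl, hcv rfl]
      have R1yw : (G.deleteEdges {s(u₁,w)}).Reachable y w :=
        (hrc.mono (del_mono G hE1w)).trans adjc1.reachable
      have R2yw : (G.deleteEdges {s(w,v₂)}).Reachable y w :=
        (hrc.mono (del_mono G hE2w)).trans adjc2.reachable
      have nR1zw : ¬ (G.deleteEdges {s(u₁,w)}).Reachable z w :=
        fun h => hdi.1.nac (R1yw.trans h.symm)
      have nR2zw : ¬ (G.deleteEdges {s(w,v₂)}).Reachable z w :=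
        fun h => hdj.1.nac (R2yw.trans h.symm)
      obtain ⟨Wz⟩ := hG.isConnected z u₁
      rcases walk_reach_endpoint G w Wz with R1zu | R1zw
      · have Rzu := avoid_vertex G nR1zw R1zu
        have R2zu : (G.deleteEdges {s(w,v₂)}).Reachable z u₁ :=
          Rzu.mono (del_mono G (fun e he => Or.inr (hE2w he)))
        apply nR2zw
        refine R2zu.trans (Adj.reachable ?_)
        rw [deleteEdges_adj]
        exact ⟨h1, by simp [hE12]⟩
      · exact nR1zw R1zw

end Aux

section Main
variable {V : Type} [Fintype V] [DecidableEq V]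

lemma matched (G : SimpleGraph V) [DecidableRel G.Adj] (hG : G.IsTree) {u w : V}
    (huw : G.Adj u w) (hdegu : G.degree u = 3) (hdegw : G.degree w = 3)
    {q : Q4 V} (hd : Distinguishes G s(u,w) q.a q.b q.c q.d) (hc : q.supp.card = 4)
    (hleaf : ∀ t ∈ q.supp, G.degree t = 1) {x : V} (hlx : G.degree x = 1)
    (hx : x ∉ q.supp) :
    SameClass G u w x q.a ∨ SameClass G u w x q.b ∨ SameClass G u w x q.c ∨
      SameClass G u w x q.d := by
  classical
  set S : Finset V := insert x q.supp with hS
  have hcS : S.card = 5 := by rw [hS, Finset.card_insert_of_notMem hx, hc]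
  have hdeg1 : ∀ v ∈ S, G.degree v = 1 := by
    intro v hv; rcases Finset.mem_insert.mp hv with rfl | hv
    exacts [hlx, hleaf v hv]
  have hvu : ∀ v ∈ S, v ≠ u := by
    intro v hv h
    have h1 := hdeg1 v hv; rw [h, hdegu] at h1; omega
  have hvw : ∀ v ∈ S, v ≠ w := by
    intro v hv h
    have h1 := hdeg1 v hv; rw [h, hdegw] at h1; omega
  set T : Finset (V × V) := ((G.neighborFinset u).erase w).image (fun c => (c, u)) ∪
    ((G.neighborFinset w).erase u).image (fun c => (c, w)) with hT
  have hcT : T.card ≤ 4 := by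
    refine (Finset.card_union_le _ _).trans ?_
    have h1 : (((G.neighborFinset u).erase w).image (fun c => (c, u))).card ≤ 2 := by
      refine Finset.card_image_le.trans ?_
      rw [Finset.card_erase_of_mem ((G.mem_neighborFinset _ _).mpr huw),
        G.card_neighborFinset_eq_degree, hdegu]
    have h2 : (((G.neighborFinset w).erase u).image (fun c => (c, w))).card ≤ 2 := by
      refine Finset.card_image_le.trans ?_
      rw [Finset.card_erase_of_mem ((G.mem_neighborFinset _ _).mpr huw.symm),
        G.card_neighborFinset_eq_degree, hdegw]
    omega
  have hmaps : ∀ v : V, ∃ p : V × V, v ∈ S →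
      p ∈ T ∧ (G.deleteEdges (G.incidenceSet u ∪ G.incidenceSet w)).Reachable v p.1 := by
    intro v
    by_cases hv : v ∈ S
    · obtain ⟨W⟩ := hG.isConnected v u
      obtain ⟨c0, d0, hcd, hd0, hc0u, hc0w, hr⟩ := walk_attach G w W (hvu v hv) (hvw v hv)
      refine ⟨(c0, d0), fun _ => ⟨?_, hr⟩⟩
      rcases hd0 with rfl | rfl
      · apply Finset.mem_union_left
        exact Finset.mem_image.mpr ⟨c0,
          Finset.mem_erase.mpr ⟨hc0w, (G.mem_neighborFinset _ _).mpr hcd.symm⟩, rfl⟩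
      · apply Finset.mem_union_right
        exact Finset.mem_image.mpr ⟨c0,
          Finset.mem_erase.mpr ⟨hc0u, (G.mem_neighborFinset _ _).mpr hcd.symm⟩, rfl⟩
    · exact ⟨(v, v), fun h => absurd h hv⟩
  choose f hf using hmaps
  obtain ⟨v₁, hv₁, v₂, hv₂, hvne, hfeq⟩ :=
    Finset.exists_ne_map_eq_of_card_lt_of_maps_to (by omega : T.card < S.card)
      (fun v hv => (hf v hv).1)
  have hreach : (G.deleteEdges (G.incidenceSet u ∪ G.incidenceSet w)).Reachable v₁ v₂ := by
    have r1 := (hf v₁ hv₁).2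
    have r2 := (hf v₂ hv₂).2
    rw [hfeq] at r1
    exact r1.trans r2.symm
  have hmem : ∀ v ∈ S, v = x ∨ (v = q.a ∨ v = q.b ∨ v = q.c ∨ v = q.d) := by
    intro v hv; rcases Finset.mem_insert.mp hv with rfl | hv
    · exact Or.inl rfl
    · right; simpa [Q4.supp, Finset.mem_insert] using hv
  rcases hmem v₁ hv₁ with rfl | hm1
  · rcases hmem v₂ hv₂ with rfl | hm2
    · exact absurd rfl hvne
    · rcases hm2 with rfl | rfl | rfl | rfl
      exacts [Or.inl hreach, Or.inr (Or.inl hreach),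
        Or.inr (Or.inr (Or.inl hreach)), Or.inr (Or.inr (Or.inr hreach))]
  · rcases hmem v₂ hv₂ with rfl | hm2
    · rcases hm1 with rfl | rfl | rfl | rfl
      exacts [Or.inl hreach.symm, Or.inr (Or.inl hreach.symm),
        Or.inr (Or.inr (Or.inl hreach.symm)), Or.inr (Or.inr (Or.inr hreach.symm))]
    · exfalso
      have hsub1 : ({s(u,w)} : Set (Sym2 V)) ⊆ G.incidenceSet u ∪ G.incidenceSet w := by
        intro e he; rw [Set.mem_singleton_iff] at he; subst he
        exact Or.inl ((G.mk'_mem_incidenceSet_left_iff).mpr huw)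
      have hr1 : (G.deleteEdges {s(u,w)}).Reachable v₁ v₂ :=
        hreach.mono (del_mono G hsub1)
      obtain ⟨z, t, hd', _⟩ := normalizeQ hd hm1 hm2 hvne hr1
      exact same_pair_not_reach hG huw hd' (hvu v₁ hv₁) (hvw v₁ hv₁) hreach

lemma subst_spec (G : SimpleGraph V) {u w : V} {q : Q4 V} {x : V} (hc : q.supp.card = 4)
    (hm : SameClass G u w x q.a ∨ SameClass G u w x q.b ∨ SameClass G u w x q.c ∨
      SameClass G u w x q.d) :
    ∃ y, y ∈ q.supp ∧ SameClass G u w x y ∧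
      (subst G u w q x).supp ⊆ insert x (q.supp.erase y) := by
  obtain ⟨h1, h2, h3, h4, h5, h6⟩ :=
    four_distinct (show ({q.a, q.b, q.c, q.d} : Finset V).card = 4 from hc)
  unfold subst
  split_ifs with ha hb hcc
  · refine ⟨q.a, by simp [Q4.supp], ha, ?_⟩
    intro v hv
    simp only [Q4.supp, Finset.mem_insert, Finset.mem_singleton] at hv
    rcases hv with rfl | rfl | rfl | rfl
    · exact Finset.mem_insert_self _ _
    · exact Finset.mem_insert_of_mem (Finset.mem_erase.mpr ⟨h1.symm, by simp [Q4.supp]⟩)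
    · exact Finset.mem_insert_of_mem (Finset.mem_erase.mpr ⟨h2.symm, by simp [Q4.supp]⟩)
    · exact Finset.mem_insert_of_mem (Finset.mem_erase.mpr ⟨h3.symm, by simp [Q4.supp]⟩)
  · refine ⟨q.b, by simp [Q4.supp], hb, ?_⟩
    intro v hv
    simp only [Q4.supp, Finset.mem_insert, Finset.mem_singleton] at hv
    rcases hv with rfl | rfl | rfl | rfl
    · exact Finset.mem_insert_of_mem (Finset.mem_erase.mpr ⟨h1, by simp [Q4.supp]⟩)
    · exact Finset.mem_insert_self _ _
    · exact Finset.mem_insert_of_mem (Finset.mem_erase.mpr ⟨h4.symm, by simp [Q4.supp]⟩)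
    · exact Finset.mem_insert_of_mem (Finset.mem_erase.mpr ⟨h5.symm, by simp [Q4.supp]⟩)
  · refine ⟨q.c, by simp [Q4.supp], hcc, ?_⟩
    intro v hv
    simp only [Q4.supp, Finset.mem_insert, Finset.mem_singleton] at hv
    rcases hv with rfl | rfl | rfl | rfl
    · exact Finset.mem_insert_of_mem (Finset.mem_erase.mpr ⟨h2, by simp [Q4.supp]⟩)
    · exact Finset.mem_insert_of_mem (Finset.mem_erase.mpr ⟨h4, by simp [Q4.supp]⟩)
    · exact Finset.mem_insert_self _ _
    · exact Finset.mem_insert_of_mem (Finset.mem_erase.mpr ⟨h6.symm, by simp [Q4.supp]⟩)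
  · have hmd : SameClass G u w x q.d := by
      rcases hm with h | h | h | h
      exacts [absurd h ha, absurd h hb, absurd h hcc, h]
    refine ⟨q.d, by simp [Q4.supp], hmd, ?_⟩
    intro v hv
    simp only [Q4.supp, Finset.mem_insert, Finset.mem_singleton] at hv
    rcases hv with rfl | rfl | rfl | rfl
    · exact Finset.mem_insert_of_mem (Finset.mem_erase.mpr ⟨h3, by simp [Q4.supp]⟩)
    · exact Finset.mem_insert_of_mem (Finset.mem_erase.mpr ⟨h5, by simp [Q4.supp]⟩)
    · exact Finset.mem_insert_of_mem (Finset.mem_erase.mpr ⟨h6, by simp [Q4.supp]⟩)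
    · exact Finset.mem_insert_self _ _

lemma main_lemma (G : SimpleGraph V) [DecidableRel G.Adj]
    (hG : IsBinaryTree G) (u₁ w v₂ : V) (qi qj : Q4 V)
    (hei : InteriorEdge G s(u₁, w)) (hej : InteriorEdge G s(w, v₂))
    (hne : s(u₁, w) ≠ s(w, v₂))
    (hdi : Distinguishes G s(u₁, w) qi.a qi.b qi.c qi.d)
    (hdj : Distinguishes G s(w, v₂) qj.a qj.b qj.c qj.d)
    (hci : qi.supp.card = 4) (hcj : qj.supp.card = 4)
    (hsub : ∀ t ∈ qi.supp ∪ qj.supp, G.degree t = 1)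
    (hlink : (qi.supp ∪ qj.supp).card = 5)
    (x : V) (hlx : G.degree x = 1) (hxs : x ∉ qi.supp ∪ qj.supp) :
    ((subst G u₁ w qi x).supp ∪ (subst G w v₂ qj x).supp).card ≠ 6 := by
  intro h6
  have hGt := hG.1
  have h1adj : G.Adj u₁ w := G.mem_edgeSet.mp hei.1
  have h2adj : G.Adj w v₂ := G.mem_edgeSet.mp hej.1
  have hdegu₁ : G.degree u₁ = 3 := hei.2 u₁ (Sym2.mem_mk_left _ _)
  have hdegw : G.degree w = 3 := hei.2 w (Sym2.mem_mk_right _ _)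
  have hdegv₂ : G.degree v₂ = 3 := hej.2 v₂ (Sym2.mem_mk_right _ _)
  have hxqi : x ∉ qi.supp := fun h => hxs (Finset.mem_union_left _ h)
  have hxqj : x ∉ qj.supp := fun h => hxs (Finset.mem_union_right _ h)
  have hmi := matched G hGt h1adj hdegu₁ hdegw hdi hci
    (fun t ht => hsub t (Finset.mem_union_left _ ht)) hlx hxqi
  have hmj := matched G hGt h2adj hdegw hdegv₂ hdj hcj
    (fun t ht => hsub t (Finset.mem_union_right _ ht)) hlx hxqj
  obtain ⟨yi, hyiA, hsci, hsubi⟩ := subst_spec G hci hmi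
  obtain ⟨yj, hyjB, hscj, hsubj⟩ := subst_spec G hcj hmj
  have hcard5 : ∀ y : V, y ∈ qi.supp ∪ qj.supp →
      (subst G u₁ w qi x).supp ∪ (subst G w v₂ qj x).supp ⊆
        insert x ((qi.supp ∪ qj.supp).erase y) → False := by
    intro y hy hsub'
    have hle := Finset.card_le_card hsub'
    have h1 : (insert x ((qi.supp ∪ qj.supp).erase y)).card ≤
        ((qi.supp ∪ qj.supp).erase y).card + 1 := Finset.card_insert_le _ _
    rw [Finset.card_erase_of_mem hy, hlink] at h1
    omega
  by_cases heq : yi = yj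
  · subst heq
    refine hcard5 yi (Finset.mem_union_left _ hyiA) (Finset.union_subset ?_ ?_)
    · exact hsubi.trans (Finset.insert_subset_insert _
        (Finset.erase_subset_erase _ Finset.subset_union_left))
    · exact hsubj.trans (Finset.insert_subset_insert _
        (Finset.erase_subset_erase _ Finset.subset_union_right))
  by_cases hyiB' : yi ∈ qj.supp
  swap
  · refine hcard5 yi (Finset.mem_union_left _ hyiA) (Finset.union_subset ?_ ?_)
    · exact hsubi.trans (Finset.insert_subset_insert _
        (Finset.erase_subset_erase _ Finset.subset_union_left))
    · refine hsubj.trans (Finset.insert_subset_insert _ ?_)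
      intro v hv
      have hvB : v ∈ qj.supp := Finset.mem_of_mem_erase hv
      exact Finset.mem_erase.mpr ⟨fun h => hyiB' (h ▸ hvB), Finset.mem_union_right _ hvB⟩
  by_cases hyjA' : yj ∈ qi.supp
  swap
  · refine hcard5 yj (Finset.mem_union_right _ hyjB) (Finset.union_subset ?_ ?_)
    · refine hsubi.trans (Finset.insert_subset_insert _ ?_)
      intro v hv
      have hvA : v ∈ qi.supp := Finset.mem_of_mem_erase hv
      exact Finset.mem_erase.mpr ⟨fun h => hyjA' (h ▸ hvA), Finset.mem_union_left _ hvA⟩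
    · exact hsubj.trans (Finset.insert_subset_insert _
        (Finset.erase_subset_erase _ Finset.subset_union_right))
  -- geometric case
  have Hw : (G.deleteEdges (G.incidenceSet w)).Reachable yi yj := by
    have r1 : (G.deleteEdges (G.incidenceSet u₁ ∪ G.incidenceSet w)).Reachable x yi := hsci
    have r2 : (G.deleteEdges (G.incidenceSet w ∪ G.incidenceSet v₂)).Reachable x yj := hscj
    exact ((r1.mono (del_mono G Set.subset_union_right)).symm.trans
      (r2.mono (del_mono G Set.subset_union_left)))
  have hE1incw : ({s(u₁,w)} : Set (Sym2 V)) ⊆ G.incidenceSet w := by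
    intro e he; rw [Set.mem_singleton_iff] at he; subst he
    exact (G.mk'_mem_incidenceSet_right_iff).mpr h1adj
  have hE2incw : ({s(w,v₂)} : Set (Sym2 V)) ⊆ G.incidenceSet w := by
    intro e he; rw [Set.mem_singleton_iff] at he; subst he
    exact (G.mk'_mem_incidenceSet_left_iff).mpr h2adj
  have R1 : (G.deleteEdges {s(u₁,w)}).Reachable yi yj := Hw.mono (del_mono G hE1incw)
  have R2 : (G.deleteEdges {s(w,v₂)}).Reachable yi yj := Hw.mono (del_mono G hE2incw)
  have hmemA : ∀ v, v ∈ qi.supp ↔ (v = qi.a ∨ v = qi.b ∨ v = qi.c ∨ v = qi.d) := by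
    intro v; simp [Q4.supp]
  have hmemB : ∀ v, v ∈ qj.supp ↔ (v = qj.a ∨ v = qj.b ∨ v = qj.c ∨ v = qj.d) := by
    intro v; simp [Q4.supp]
  obtain ⟨z1, t1, hdi1, hchar1⟩ :=
    normalizeQ hdi ((hmemA yi).mp hyiA) ((hmemA yj).mp hyjA') heq R1
  obtain ⟨z2, t2, hdj1, hchar2⟩ :=
    normalizeQ hdj ((hmemB yi).mp hyiB') ((hmemB yj).mp hyjB) heq R2
  have hinter : 3 ≤ (qi.supp ∩ qj.supp).card := by
    have h := Finset.card_union_add_card_inter qi.supp qj.supp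
    rw [hlink, hci, hcj] at h; omega
  have hnsub : ¬ (qi.supp ∩ qj.supp ⊆ {yi, yj}) := by
    intro hsub'
    have hle := Finset.card_le_card hsub'
    have h2 : ({yi, yj} : Finset V).card ≤ 2 := by
      refine (Finset.card_insert_le _ _).trans ?_
      rw [Finset.card_singleton]
    omega
  obtain ⟨z0, hz0, hz0n⟩ := Finset.not_subset.mp hnsub
  have hz0A : z0 ∈ qi.supp := (Finset.mem_inter.mp hz0).1
  have hz0B : z0 ∈ qj.supp := (Finset.mem_inter.mp hz0).2
  have hz0yi : z0 ≠ yi := fun h => hz0n (by rw [h]; exact Finset.mem_insert_self _ _)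
  have hz0yj : z0 ≠ yj := fun h => hz0n (by rw [h]; simp)
  obtain ⟨t1', hdi2⟩ : ∃ t', Distinguishes G s(u₁,w) yi yj z0 t' := by
    rcases (by
      rcases hchar1 z0 ((hmemA z0).mp hz0A) with h | h | h | h
      exacts [absurd h hz0yi, absurd h hz0yj, Or.inl h, Or.inr h] :
        z0 = z1 ∨ z0 = t1) with rfl | rfl
    exacts [⟨t1, hdi1⟩, ⟨z1, hdi1.swap2⟩]
  obtain ⟨t2', hdj2⟩ : ∃ t', Distinguishes G s(w,v₂) yi yj z0 t' := by
    rcases (by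
      rcases hchar2 z0 ((hmemB z0).mp hz0B) with h | h | h | h
      exacts [absurd h hz0yi, absurd h hz0yj, Or.inl h, Or.inr h] :
        z0 = z2 ∨ z0 = t2) with rfl | rfl
    exacts [⟨t2, hdj1⟩, ⟨z2, hdj1.swap2⟩]
  have hne' : u₁ ≠ v₂ := by
    rintro rfl
    exact hne (Sym2.eq_swap)
  have hyiw : yi ≠ w := by
    intro h
    have hd1 : G.degree yi = 1 := hsub yi (Finset.mem_union_left _ hyiA)
    rw [h, hdegw] at hd1; omega
  exact core hGt h1adj h2adj hne' hyiw hdi2 hdj2 Hw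

lemma SameClass_comm (G : SimpleGraph V) (u v : V) : SameClass G u v = SameClass G v u := by
  unfold SameClass; rw [Set.union_comm]

lemma subst_symm (G : SimpleGraph V) (u v : V) (q : Q4 V) (x : V) :
    subst G u v q x = subst G v u q x := by
  unfold subst; rw [SameClass_comm]

end Main

/-- If `qᵢ`, `qⱼ` are linked quartet trees and `x` is a leaf outside their combined support,
then `x` cannot replace two different taxa of `supp(qᵢ) ∩ supp(qⱼ)`; equivalently,
`|supp(qᵢ(x)) ∪ supp(qⱼ(x))| ≠ 6`. -/
theorem stmt_10 {V : Type} [Fintype V] [DecidableEq V] (G : SimpleGraph V) [DecidableRel G.Adj]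
    (hG : IsBinaryTree G) (u₁ v₁ u₂ v₂ : V) (qi qj : Q4 V)
    (hei : InteriorEdge G s(u₁, v₁)) (hej : InteriorEdge G s(u₂, v₂))
    (hne : s(u₁, v₁) ≠ s(u₂, v₂)) (hadj : ∃ w, w ∈ s(u₁, v₁) ∧ w ∈ s(u₂, v₂))
    (hdi : Distinguishes G s(u₁, v₁) qi.a qi.b qi.c qi.d)
    (hdj : Distinguishes G s(u₂, v₂) qj.a qj.b qj.c qj.d)
    (hci : qi.supp.card = 4) (hcj : qj.supp.card = 4)
    (hsub : ∀ t ∈ qi.supp ∪ qj.supp, G.degree t = 1)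
    (hlink : (qi.supp ∪ qj.supp).card = 5)
    (x : V) (hlx : G.degree x = 1) (hxs : x ∉ qi.supp ∪ qj.supp) :
    ((subst G u₁ v₁ qi x).supp ∪ (subst G u₂ v₂ qj x).supp).card ≠ 6 := by
  obtain ⟨w, hw1, hw2⟩ := hadj
  rw [Sym2.mem_iff] at hw1 hw2
  have e12 : ∀ (a b : V), s(a, b) = s(b, a) := fun a b => Sym2.eq_swap
  rcases hw1 with rfl | rfl
  · rcases hw2 with rfl | rfl
    · -- shared vertex is u₁ = u₂ (now named w)
      rw [subst_symm G w v₁ qi x]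
      rw [e12 w v₁] at hei hdi hne
      exact main_lemma G hG v₁ w v₂ qi qj hei hej hne hdi hdj hci hcj hsub hlink x hlx hxs
    · -- shared vertex is u₁ = v₂
      rw [subst_symm G w v₁ qi x, subst_symm G u₂ w qj x]
      rw [e12 w v₁] at hei hdi hne
      rw [e12 u₂ w] at hej hdj hne
      exact main_lemma G hG v₁ w u₂ qi qj hei hej hne hdi hdj hci hcj hsub hlink x hlx hxs
  · rcases hw2 with rfl | rfl
    · -- shared vertex is v₁ = u₂
      exact main_lemma G hG u₁ w v₂ qi qj hei hej hne hdi hdj hci hcj hsub hlink x hlx hxs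
    · -- shared vertex is v₁ = v₂
      rw [subst_symm G u₂ w qj x]
      rw [e12 u₂ w] at hej hdj hne
      exact main_lemma G hG u₁ w u₂ qi qj hei hej hne hdi hdj hci hcj hsub hlink x hlx hxs
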